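/- Let (Y_k, δ_i) be an SCS with associated injective partial shifts α_i on Y_∞, and for y ∈ Y_∞ define the normal label χ̂(y) : ℕ → {0,1} by χ̂(y)_n = 0 if α_n(y) = α_{n+1}(y) and χ̂(y)_n = 1 otherwise. Then χ̂(α_j(y)) = ε_j(χ̂(y)), where ε_j inserts a 0 at position j. -/
import Mathlib


/-- The insertion operation `ε_j` on labels, here modelled as predicates
`χ : ℕ → Prop` (`False` stands for `0` and `True` for `1`): it inserts a `0`
at position `j`. -/
def insertZeroP (j : ℕ) (χ : ℕ → Prop) : ℕ → Prop :=
  fun i => if i < j then χ i else if i = j then False else χ (i - 1)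

/-- The normal label of an element `y`, determined by the partial shifts:
`χ̂(y)_n = 0` iff `α n y = α (n+1) y`. -/
def normalLabel {Y : Type*} (α : ℕ → Y → Y) (y : Y) : ℕ → Prop :=
  fun n => α n y ≠ α (n + 1) y

/-- Let `(Y_k, δ_i)` be an SCS (modelled by its tower of subsets `Yk` of `Y_∞`, with
`Yk k = Y_k`, covering `Y_∞`, to which the injective partial shifts `α i` are adapted and
with `Y_{k}` fixed pointwise by `α n` for `n > k`).  Then the normal label satisfies
`χ̂(α_j y) = ε_j (χ̂ y)`. -/
theorem normalLabel_of_shift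
    {Y : Type*} (α : ℕ → Y → Y) (Yk : ℕ → Set Y)
    (hinj : ∀ i : ℕ, Function.Injective (α i))
    (hps : ∀ i j : ℕ, i < j → ∀ y : Y, α j (α i y) = α i (α (j - 1) y))
    (htower : Monotone Yk)
    (hcover : ∀ y : Y, ∃ k : ℕ, y ∈ Yk k)
    (hadapted : ∀ (i k : ℕ), Set.MapsTo (α i) (Yk k) (Yk (k + 1)))
    (hfix : ∀ (k n : ℕ), k < n → ∀ y ∈ Yk k, α n y = y)
    (y : Y) (j : ℕ) :
    normalLabel α (α j y) = insertZeroP j (normalLabel α y) := by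
  funext n
  simp only [normalLabel, insertZeroP]
  rcases lt_trichotomy n j with h | h | h
  · rw [if_pos h]
    have h1 : α n (α j y) = α (j + 1) (α n y) := by
      have := hps n (j + 1) (by omega) y
      simpa using this.symm
    have h2 : α (n + 1) (α j y) = α (j + 1) (α (n + 1) y) := by
      have := hps (n + 1) (j + 1) (by omega) y
      simpa using this.symm
    rw [h1, h2, eq_iff_iff]
    exact not_congr (hinj (j + 1)).eq_iff
  · subst h
    rw [if_neg (lt_irrefl _), if_pos rfl, eq_iff_iff, iff_false, not_not]
    have := hps n (n + 1) (by omega) y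
    simpa using this.symm
  · rw [if_neg (by omega), if_neg (by omega)]
    have h1 : α n (α j y) = α j (α (n - 1) y) := hps j n (by omega) y
    have h2 : α (n + 1) (α j y) = α j (α n y) := by
      have := hps j (n + 1) (by omega) y
      simpa using this
    have h3 : n - 1 + 1 = n := by omega
    rw [h1, h2, h3, eq_iff_iff]
    exact not_congr (hinj j).eq_iff
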